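/- For n ∈ ℕ, let l1(n) be the maximum of lcm(b1,...,bn)/((b1−1)···(bn−1)) over all integers b1,...,bn ≥ 2. Then l1(n) = ∏_{i=1}^n p_i/(p_i − 1), where p_i is the i-th prime number. -/

import Mathlib

open Finset

-- lcm factorization as sup
lemma aux_lcm_fact {ι : Type*} (s : Finset ι) (f : ι → ℕ) (hf : ∀ i ∈ s, f i ≠ 0) (p : ℕ) :
    (s.lcm f).factorization p = s.sup fun i => (f i).factorization p := by
  classical
  induction s using Finset.induction with
  | empty => simp
  | @insert a s ha ih =>
    rw [Finset.lcm_insert, Finset.sup_insert, lcm_eq_nat_lcm,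
      Nat.factorization_lcm (hf a (mem_insert_self a s))
        (by simp only [Ne, Finset.lcm_eq_zero_iff]; rintro ⟨x, hx, h0⟩;
            exact hf x (mem_insert_of_mem hx) h0),
    ]
    rw [Finsupp.sup_apply, ih fun i hi => hf i (mem_insert_of_mem hi)]

lemma aux_one_le (a : ℕ) (ha : 2 ≤ a) : (1:ℚ) ≤ (a:ℚ)/((a:ℚ)-1) := by
  have : (1:ℚ) ≤ (a:ℚ) - 1 := by
    have : (2:ℚ) ≤ a := by exact_mod_cast ha
    linarith
  rw [le_div_iff₀ (by linarith)]; linarith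

lemma aux_ratio_le (a b : ℕ) (ha : 2 ≤ a) (hab : a ≤ b) :
    (b:ℚ)/((b:ℚ)-1) ≤ (a:ℚ)/((a:ℚ)-1) := by
  have h2a : (2:ℚ) ≤ a := by exact_mod_cast ha
  have hab' : (a:ℚ) ≤ b := by exact_mod_cast hab
  rw [div_le_div_iff₀ (by linarith) (by linarith)]
  nlinarith

lemma aux_nonneg (a : ℕ) (ha : 2 ≤ a) : (0:ℚ) ≤ (a:ℚ)/((a:ℚ)-1) :=
  le_trans zero_le_one (aux_one_le a ha)

lemma aux_primes_prod (Q : Finset ℕ) (hQ : ∀ p ∈ Q, p.Prime) :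
    ∏ p ∈ Q, (p:ℚ)/((p:ℚ)-1) ≤
      ∏ i ∈ Finset.range Q.card,
        ((Nat.nth Nat.Prime i : ℚ) / ((Nat.nth Nat.Prime i : ℚ) - 1)) := by
  classical
  set k := Q.card with hk
  let e := Q.orderIsoOfFin hk.symm
  have hnth : ∀ i : Fin k, Nat.nth Nat.Prime i ≤ (e i : ℕ) := by
    intro i
    have h1 : (i:ℕ) ≤ Nat.count Nat.Prime (e i) := by
      rw [Nat.count_eq_card_filter_range]
      have : (Finset.range (i:ℕ)).card ≤
          ((Finset.range ((e i : ℕ))).filter Nat.Prime).card := Finset.card_le_card_of_injOn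
        (fun j => if h : j < k then ((e ⟨j, h⟩ : ℕ)) else 0)
        (fun j hj => by
          rw [Finset.mem_coe, Finset.mem_range] at hj
          have hjk : j < k := lt_trans hj i.2
          simp only [dif_pos hjk, Finset.mem_coe, Finset.mem_filter, Finset.mem_range]
          exact ⟨e.strictMono (show (⟨j, hjk⟩ : Fin k) < i from hj),
            hQ _ (e ⟨j, hjk⟩).2⟩)
        (fun a ha b hb hab => by
          rw [Finset.mem_coe, Finset.mem_range] at ha hb
          have hak : a < k := lt_trans ha i.2
          have hbk : b < k := lt_trans hb i.2
          simp only [dif_pos hak, dif_pos hbk] at hab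
          have : (⟨a, hak⟩ : Fin k) = ⟨b, hbk⟩ := by
            apply e.injective; exact Subtype.ext hab
          simpa using congrArg Fin.val this)
      simpa using this
    calc Nat.nth Nat.Prime i ≤ Nat.nth Nat.Prime (Nat.count Nat.Prime (e i)) :=
          Nat.nth_monotone Nat.infinite_setOf_prime h1
      _ = (e i : ℕ) := Nat.nth_count (hQ _ (e i).2)
  have hQe : ∏ p ∈ Q, (p:ℚ)/((p:ℚ)-1) = ∏ i : Fin k, ((e i : ℕ):ℚ)/(((e i : ℕ):ℚ)-1) := by
    rw [← Finset.prod_attach Q (fun p => (p:ℚ)/((p:ℚ)-1))]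
    exact (Fintype.prod_equiv e.toEquiv _ _ (fun i => rfl)).symm
  rw [hQe, ← Fin.prod_univ_eq_prod_range]
  apply Finset.prod_le_prod
  · intro i _; exact aux_nonneg _ (hQ _ (e i).2).two_le
  · intro i _
    exact aux_ratio_le _ _ (Nat.prime_nth_prime i).two_le (hnth i)

lemma aux_ub (n : ℕ) (b : Fin n → ℕ) (hb : ∀ i, 2 ≤ b i) :
    (((Finset.univ.lcm b : ℕ) : ℚ)) / ∏ i, ((b i : ℚ) - 1) ≤
      ∏ i ∈ Finset.range n, ((Nat.nth Nat.Prime i : ℚ) / ((Nat.nth Nat.Prime i : ℚ) - 1)) := by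
  classical
  rcases Nat.eq_zero_or_pos n with rfl | hn
  · simp
  have hne : (Finset.univ : Finset (Fin n)).Nonempty := ⟨⟨0, hn⟩, mem_univ _⟩
  have hb0 : ∀ i, b i ≠ 0 := fun i => by have := hb i; omega
  set L := Finset.univ.lcm b with hLdef
  have hL0 : L ≠ 0 := by
    rw [hLdef, Ne, Finset.lcm_eq_zero_iff]
    rintro ⟨i, -, hi⟩
    exact hb0 i hi
  have hgex : ∀ p : ℕ, ∃ i : Fin n, L.factorization p = (b i).factorization p := by
    intro p
    obtain ⟨i, -, hi⟩ := Finset.exists_mem_eq_sup Finset.univ hne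
      (fun i => (b i).factorization p)
    exact ⟨i, by rw [hLdef, aux_lcm_fact _ _ (fun i _ => hb0 i) p, ← hi]⟩
  choose g hg using hgex
  set c : Fin n → ℕ := fun i =>
    ∏ p ∈ L.primeFactors.filter (fun p => g p = i), p ^ L.factorization p with hcdef
  have hA : ∏ i, c i = L := by
    rw [hcdef]
    rw [Finset.prod_fiberwise_of_maps_to (g := g) (fun p _ => Finset.mem_univ (g p))
        (fun p => p ^ L.factorization p)]
    conv_rhs => rw [← Nat.factorization_prod_pow_eq_self hL0]
    rw [Finsupp.prod, Nat.support_factorization]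
  have hc0 : ∀ i, c i ≠ 0 := fun i => by
    rw [hcdef]
    apply Finset.prod_ne_zero_iff.mpr
    intro p hp
    exact pow_ne_zero _
      (Nat.prime_of_mem_primeFactors (Finset.mem_filter.mp hp).1).ne_zero
  have hcdvd : ∀ i, c i ∣ b i := by
    intro i
    rw [← Nat.factorization_le_iff_dvd (hc0 i) (hb0 i), Finsupp.le_def]
    intro q
    rw [hcdef]
    rw [Nat.factorization_prod (fun p hp => pow_ne_zero _
      (Nat.prime_of_mem_primeFactors (Finset.mem_filter.mp hp).1).ne_zero)]
    rw [Finset.sum_apply']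
    rw [Finset.sum_congr rfl (fun p hp => by
      rw [(Nat.prime_of_mem_primeFactors (Finset.mem_filter.mp hp).1).factorization_pow,
        Finsupp.single_apply])]
    rw [Finset.sum_ite_eq']
    split_ifs with hq
    · obtain ⟨hq1, hq2⟩ := Finset.mem_filter.mp hq
      rw [← hq2, ← hg q]
    · exact Nat.zero_le _
  have hcb : ∀ i, c i ≤ b i := fun i => Nat.le_of_dvd (by have := hb i; omega) (hcdvd i)
  have hmem : ∀ i q, q.Prime → q ∣ c i → g q = i := by
    intro i q hq hdvd
    rw [hcdef] at hdvd
    obtain ⟨p, hp, hdvd'⟩ := hq.prime.exists_mem_finset_dvd hdvd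
    have hpq : q = p := (Nat.prime_dvd_prime_iff_eq hq
      (Nat.prime_of_mem_primeFactors (Finset.mem_filter.mp hp).1)).mp
      (hq.dvd_of_dvd_pow hdvd')
    rw [hpq]
    exact (Finset.mem_filter.mp hp).2
  set T := Finset.univ.filter (fun i => 2 ≤ c i) with hTdef
  have hinj : Set.InjOn (fun i => (c i).minFac) T := by
    intro i hi j hj hij
    rw [Finset.mem_coe, hTdef, Finset.mem_filter] at hi hj
    have hpi : ((c i).minFac).Prime := Nat.minFac_prime (by omega)
    have h1 : g ((c i).minFac) = i := hmem i _ hpi (Nat.minFac_dvd _)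
    have h2 : g ((c j).minFac) = j := hmem j _ (Nat.minFac_prime (by omega)) (Nat.minFac_dvd _)
    simp only at hij
    rw [← h1, ← h2, hij]
  set Q := T.image (fun i => (c i).minFac) with hQdef
  have hQprime : ∀ p ∈ Q, p.Prime := by
    intro p hp
    rw [hQdef, Finset.mem_image] at hp
    obtain ⟨i, hi, rfl⟩ := hp
    rw [hTdef, Finset.mem_filter] at hi
    exact Nat.minFac_prime (by omega)
  have hQcard : Q.card ≤ n := by
    rw [hQdef, Finset.card_image_of_injOn hinj]
    calc T.card ≤ (Finset.univ : Finset (Fin n)).card := Finset.card_filter_le _ _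
      _ = n := Finset.card_univ.trans (Fintype.card_fin n)
  -- main chain
  have hsplit : ((L:ℕ):ℚ) / ∏ i, ((b i:ℚ)-1) = ∏ i, ((c i:ℚ)/((b i:ℚ)-1)) := by
    rw [← hA, Nat.cast_prod, Finset.prod_div_distrib]
  rw [hsplit]
  have hstep1 : ∏ i, ((c i:ℚ)/((b i:ℚ)-1)) ≤
      ∏ i, (if 2 ≤ c i then ((c i).minFac:ℚ)/(((c i).minFac:ℚ)-1) else 1) := by
    apply Finset.prod_le_prod
    · intro i _
      have h2 : (2:ℚ) ≤ (b i:ℚ) := by exact_mod_cast hb i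
      exact div_nonneg (Nat.cast_nonneg _) (by linarith)
    · intro i _
      have h2b : (2:ℚ) ≤ (b i:ℚ) := by exact_mod_cast hb i
      by_cases hci : 2 ≤ c i
      · rw [if_pos hci]
        have h2c : (2:ℚ) ≤ (c i:ℚ) := by exact_mod_cast hci
        have hcb' : (c i:ℚ) ≤ (b i:ℚ) := by exact_mod_cast hcb i
        calc (c i:ℚ)/((b i:ℚ)-1) ≤ (c i:ℚ)/((c i:ℚ)-1) := by
              apply div_le_div_of_nonneg_left (by linarith) (by linarith) (by linarith)
          _ ≤ ((c i).minFac:ℚ)/(((c i).minFac:ℚ)-1) :=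
              aux_ratio_le _ _ (Nat.minFac_prime (by omega)).two_le
                (Nat.minFac_le (by omega))
      · rw [if_neg hci]
        have hc1 : c i = 1 := by have := hc0 i; omega
        rw [hc1]
        rw [div_le_one (by linarith)]
        push_cast
        linarith
  refine le_trans hstep1 ?_
  have hstep2 : ∏ i, (if 2 ≤ c i then ((c i).minFac:ℚ)/(((c i).minFac:ℚ)-1) else 1) =
      ∏ p ∈ Q, (p:ℚ)/((p:ℚ)-1) := by
    rw [hQdef, Finset.prod_image hinj, hTdef, Finset.prod_filter]
  rw [hstep2]
  refine le_trans (aux_primes_prod Q hQprime) ?_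
  rw [← Finset.prod_range_mul_prod_Ico _ hQcard]
  refine le_mul_of_one_le_right (Finset.prod_nonneg fun i _ =>
    aux_nonneg _ (Nat.prime_nth_prime i).two_le) ?_
  calc (1:ℚ) = ∏ _i ∈ Finset.Ico Q.card n, (1:ℚ) := by simp
    _ ≤ _ := Finset.prod_le_prod (fun i _ => zero_le_one)
        (fun i _ => aux_one_le _ (Nat.prime_nth_prime i).two_le)

theorem stmt9 (n : ℕ) :
    (∀ b : Fin n → ℕ, (∀ i, 2 ≤ b i) →
      (((Finset.univ.lcm b : ℕ) : ℚ)) / ∏ i, ((b i : ℚ) - 1) ≤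
        ∏ i ∈ Finset.range n, ((Nat.nth Nat.Prime i : ℚ) / ((Nat.nth Nat.Prime i : ℚ) - 1))) ∧
    (∃ b : Fin n → ℕ, (∀ i, 2 ≤ b i) ∧
      (((Finset.univ.lcm b : ℕ) : ℚ)) / ∏ i, ((b i : ℚ) - 1) =
        ∏ i ∈ Finset.range n, ((Nat.nth Nat.Prime i : ℚ) / ((Nat.nth Nat.Prime i : ℚ) - 1))) := by
  constructor
  · exact fun b hb => aux_ub n b hb
  · classical
    refine ⟨fun i => Nat.nth Nat.Prime (i:ℕ), fun i => (Nat.prime_nth_prime _).two_le, ?_⟩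
    set b : Fin n → ℕ := fun i => Nat.nth Nat.Prime (i:ℕ) with hbdef
    have hinj : Function.Injective b := fun i j hij => by
      have := Nat.nth_injective Nat.infinite_setOf_prime hij
      exact Fin.val_injective this
    have hlcm : Finset.univ.lcm b = ∏ i, b i := by
      apply Nat.dvd_antisymm
      · exact Finset.lcm_dvd fun i _ => Finset.dvd_prod_of_mem b (Finset.mem_univ i)
      · have him : ∏ p ∈ Finset.univ.image b, p = ∏ i, b i :=
          Finset.prod_image (f := fun p => p) (fun i _ j _ h => hinj h)
        rw [← him]
        apply Finset.prod_primes_dvd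
        · intro p hp
          obtain ⟨i, -, rfl⟩ := Finset.mem_image.mp hp
          exact (Nat.prime_nth_prime _).prime
        · intro p hp
          obtain ⟨i, -, rfl⟩ := Finset.mem_image.mp hp
          exact Finset.dvd_lcm (Finset.mem_univ i)
    rw [hlcm, Nat.cast_prod, ← Finset.prod_div_distrib, ← Fin.prod_univ_eq_prod_range
      (fun i => ((Nat.nth Nat.Prime i : ℚ) / ((Nat.nth Nat.Prime i : ℚ) - 1))) n]
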